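/- Every nontrivial identity u ≈ v satisfied by the hypoplactic monoid hypo has length at least 4, that is, |u| ≥ 4 and |v| ≥ 4 (in fact |u| = |v| since the identity must be balanced). -/

import Mathlib

open FreeMonoid

/-- The alphabet `A = {1 < 2 < 3 < ...}` of positive integers. -/
abbrev Alph : Type := ℕ+

/-- The finite alphabet `A_n = {1 < ... < n}`. -/
abbrev AlphN (n : ℕ) : Type := {a : ℕ+ // (a : ℕ) ≤ n}

/-- The defining relations of the hypoplactic monoid. -/
def HypoRel (u v : FreeMonoid Alph) : Prop :=
  (∃ a b c : Alph, a ≤ b ∧ b < c ∧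
      u = of a * of c * of b ∧ v = of c * of a * of b) ∨
  (∃ a b c : Alph, a < b ∧ b ≤ c ∧
      u = of b * of a * of c ∧ v = of b * of c * of a) ∨
  (∃ a b c d : Alph, a ≤ b ∧ b < c ∧ c ≤ d ∧
      u = of c * of a * of d * of b ∧ v = of a * of c * of b * of d) ∨
  (∃ a b c d : Alph, a < b ∧ b ≤ c ∧ c < d ∧
      u = of b * of d * of a * of c ∧ v = of d * of b * of c * of a)

/-- The hypoplactic congruence on `A*`: the congruence generated by `HypoRel`. -/
def hypoCon : Con (FreeMonoid Alph) := conGen HypoRel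

/-- The infinite-rank hypoplactic monoid `hypo`. -/
abbrev Hypo : Type := hypoCon.Quotient

/-- The inclusion of `A_n*` into `A*`. -/
def inclN (n : ℕ) : FreeMonoid (AlphN n) →* FreeMonoid Alph :=
  FreeMonoid.map Subtype.val

/-- The hypoplactic congruence restricted to `A_n*`. -/
def hypoConN (n : ℕ) : Con (FreeMonoid (AlphN n)) :=
  hypoCon.comap (inclN n) (fun x y => map_mul (inclN n) x y)

/-- The rank-`n` hypoplactic monoid `hypo_n`. -/
abbrev HypoN (n : ℕ) : Type := (hypoConN n).Quotient

/-- The letter `1` of `A_2`. -/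
def a1 : AlphN 2 := ⟨1, by norm_num⟩

/-- The letter `2` of `A_2`. -/
def a2 : AlphN 2 := ⟨2, by norm_num⟩

/-- The homomorphism `φ_{ij} : A* → hypo_2`, sending `i ↦ [1]`, `j ↦ [2]`,
`a ↦ [21]` for `i < a < j`, and every other letter to the identity. -/
def phi (i j : Alph) : FreeMonoid Alph →* HypoN 2 :=
  FreeMonoid.lift fun a =>
    if a = i then (hypoConN 2).mk' (of a1)
    else if a = j then (hypoConN 2).mk' (of a2)
    else if i < a ∧ a < j then (hypoConN 2).mk' (of a2 * of a1)
    else 1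

/-- A monoid `M` satisfies the identity `u ≈ v` (over the alphabet of variables `X`)
if every homomorphic evaluation of the two words in `M` gives equal values. -/
def MSatisfies (M : Type*) [Monoid M] {X : Type*} (u v : FreeMonoid X) : Prop :=
  ∀ ψ : FreeMonoid X →* M, ψ u = ψ v

/-- An identity `u ≈ v` is balanced if every variable occurs the same number of
times in `u` as in `v`. -/
def IsBalanced {X : Type*} [DecidableEq X] (u v : FreeMonoid X) : Prop :=
  ∀ x : X, u.toList.count x = v.toList.count x


/-! ### Auxiliary machinery -/

/-- The finite separating monoid: transformations of a 3-element set. -/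
abbrev MM : Type := Function.End (Fin 3)

instance : DecidableEq MM := fun f g =>
  haveI : Decidable (∀ i : Fin 3, f i = g i) :=
    @Fintype.decidableForallFintype _ _ (fun i => instDecidableEqFin 3 (f i) (g i)) _
  decidable_of_iff (∀ i, f i = g i) ⟨funext, fun h i => h ▸ rfl⟩

def em1 : MM := ![0, 0, 2]
def em2 : MM := ![2, 1, 2]

/-- The map of letters into `MM`: `1 ↦ em1`, `2 ↦ em2`, everything else to `1`. -/
def fM : Alph → MM := fun a => if (a : ℕ) = 1 then em1 else if (a : ℕ) = 2 then em2 else 1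

lemma fM_tri (a : Alph) :
    (fM a = em1 ∧ (a : ℕ) = 1) ∨ (fM a = em2 ∧ (a : ℕ) = 2) ∨ (fM a = 1 ∧ 3 ≤ (a : ℕ)) := by
  by_cases h1 : (a : ℕ) = 1
  · exact Or.inl ⟨by simp [fM, h1], h1⟩
  by_cases h2 : (a : ℕ) = 2
  · exact Or.inr <| Or.inl ⟨by simp [fM, h1, h2], h2⟩
  · have := a.pos
    exact Or.inr <| Or.inr ⟨by simp [fM, h1, h2], by omega⟩

lemma hkerM : hypoCon ≤ Con.ker (FreeMonoid.lift fM) := by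
  apply Con.conGen_le.2
  rintro x y (⟨a, b, c, hab, hbc, rfl, rfl⟩ | ⟨a, b, c, hab, hbc, rfl, rfl⟩ |
    ⟨a, b, c, d, hab, hbc, hcd, rfl, rfl⟩ | ⟨a, b, c, d, hab, hbc, hcd, rfl, rfl⟩) <;>
    rw [Con.ker_rel] <;>
    simp only [map_mul, FreeMonoid.lift_eval_of]
  · replace hab := (PNat.coe_le_coe _ _).2 hab
    replace hbc := (PNat.coe_lt_coe _ _).2 hbc
    rcases fM_tri a with ⟨ea, ha⟩ | ⟨ea, ha⟩ | ⟨ea, ha⟩ <;>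
      rcases fM_tri b with ⟨eb, hb⟩ | ⟨eb, hb⟩ | ⟨eb, hb⟩ <;>
      rcases fM_tri c with ⟨ec, hc⟩ | ⟨ec, hc⟩ | ⟨ec, hc⟩ <;>
      rw [ea, eb, ec] <;> first | decide | (exfalso; omega)
  · replace hab := (PNat.coe_lt_coe _ _).2 hab
    replace hbc := (PNat.coe_le_coe _ _).2 hbc
    rcases fM_tri a with ⟨ea, ha⟩ | ⟨ea, ha⟩ | ⟨ea, ha⟩ <;>
      rcases fM_tri b with ⟨eb, hb⟩ | ⟨eb, hb⟩ | ⟨eb, hb⟩ <;>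
      rcases fM_tri c with ⟨ec, hc⟩ | ⟨ec, hc⟩ | ⟨ec, hc⟩ <;>
      rw [ea, eb, ec] <;> first | decide | (exfalso; omega)
  · replace hab := (PNat.coe_le_coe _ _).2 hab
    replace hbc := (PNat.coe_lt_coe _ _).2 hbc
    replace hcd := (PNat.coe_le_coe _ _).2 hcd
    rcases fM_tri a with ⟨ea, ha⟩ | ⟨ea, ha⟩ | ⟨ea, ha⟩ <;>
      rcases fM_tri b with ⟨eb, hb⟩ | ⟨eb, hb⟩ | ⟨eb, hb⟩ <;>
      rcases fM_tri c with ⟨ec, hc⟩ | ⟨ec, hc⟩ | ⟨ec, hc⟩ <;>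
      rcases fM_tri d with ⟨ed, hd⟩ | ⟨ed, hd⟩ | ⟨ed, hd⟩ <;>
      rw [ea, eb, ec, ed] <;> first | decide | (exfalso; omega)
  · replace hab := (PNat.coe_lt_coe _ _).2 hab
    replace hbc := (PNat.coe_le_coe _ _).2 hbc
    replace hcd := (PNat.coe_lt_coe _ _).2 hcd
    rcases fM_tri a with ⟨ea, ha⟩ | ⟨ea, ha⟩ | ⟨ea, ha⟩ <;>
      rcases fM_tri b with ⟨eb, hb⟩ | ⟨eb, hb⟩ | ⟨eb, hb⟩ <;>
      rcases fM_tri c with ⟨ec, hc⟩ | ⟨ec, hc⟩ | ⟨ec, hc⟩ <;>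
      rcases fM_tri d with ⟨ed, hd⟩ | ⟨ed, hd⟩ | ⟨ed, hd⟩ <;>
      rw [ea, eb, ec, ed] <;> first | decide | (exfalso; omega)

/-- The separating homomorphism `hypo → MM`. -/
def PhiM : Hypo →* MM := hypoCon.lift (FreeMonoid.lift fM) hkerM

lemma PhiM_of (a : Alph) : PhiM (hypoCon.mk' (of a)) = fM a := by
  rw [PhiM, Con.lift_mk', FreeMonoid.lift_eval_of]

lemma fM_one : fM 1 = em1 := by simp [fM]

lemma fM_two : fM 2 = em2 := by
  have h2 : ((2 : ℕ+) : ℕ) = 2 := rfl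
  simp [fM, h2]

/-- The length homomorphism `hypo → (ℕ, +)`. -/
def fL : Alph → Multiplicative ℕ := fun _ => Multiplicative.ofAdd 1

lemma hkerL : hypoCon ≤ Con.ker (FreeMonoid.lift fL) := by
  apply Con.conGen_le.2
  rintro x y (⟨a, b, c, hab, hbc, rfl, rfl⟩ | ⟨a, b, c, hab, hbc, rfl, rfl⟩ |
    ⟨a, b, c, d, hab, hbc, hcd, rfl, rfl⟩ | ⟨a, b, c, d, hab, hbc, hcd, rfl, rfl⟩) <;>
    rw [Con.ker_rel] <;> rfl

def LM : Hypo →* Multiplicative ℕ := hypoCon.lift (FreeMonoid.lift fL) hkerL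

lemma LM_of (a : Alph) : LM (hypoCon.mk' (of a)) = Multiplicative.ofAdd 1 := by
  rw [LM, Con.lift_mk', FreeMonoid.lift_eval_of]; rfl

lemma eval_comp {N : Type*} [Monoid N] {X : Type*} (F : Hypo →* N) (g : X → Hypo)
    (w : FreeMonoid X) :
    F (FreeMonoid.lift g w) = (w.toList.map fun x => F (g x)).prod := by
  rw [FreeMonoid.lift_apply, MonoidHom.map_list_prod, List.map_map]
  rfl

lemma prod_const_length {X : Type*} (l : List X) :
    (l.map fun _ => Multiplicative.ofAdd (1 : ℕ)).prod = Multiplicative.ofAdd l.length := by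
  induction l with
  | nil => rfl
  | cons x l ih =>
    rw [List.map_cons, List.prod_cons, ih, List.length_cons, ← ofAdd_add]
    congr 1
    omega

lemma prod_indicator_count {X : Type*} [DecidableEq X] (p : X) (l : List X) :
    (l.map fun x => if x = p then Multiplicative.ofAdd (1 : ℕ) else 1).prod
      = Multiplicative.ofAdd (l.count p) := by
  induction l with
  | nil => rfl
  | cons x l ih =>
    by_cases hx : x = p <;>
      simp only [List.map_cons, List.prod_cons, ih, List.count_cons, hx, if_true, if_false,
        beq_self_eq_true, beq_iff_eq, ite_true, ite_false, one_mul, ← ofAdd_add] <;>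
      first
        | (congr 1; omega)
        | simp [hx]

section Comb

variable {X : Type*} [DecidableEq X]

lemma perm2 {a b d e : X} (h : [a, b].Perm [d, e]) :
    (d = a ∧ e = b) ∨ (d = b ∧ e = a) := by
  by_cases hda : d = a
  · subst hda
    left
    have h2 := List.perm_singleton.1 h.cons_inv
    simp only [List.cons.injEq, and_true] at h2
    exact ⟨rfl, h2.symm⟩
  · have hd : d ∈ [a, b] := h.symm.subset (by simp)
    have ha : a ∈ [d, e] := h.subset (by simp)
    simp only [List.mem_cons, List.mem_singleton, List.not_mem_nil, or_false] at hd ha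
    rcases hd with hd | hd
    · exact absurd hd hda
    · rcases ha with ha | ha
      · exact absurd ha.symm hda
      · right
        exact ⟨hd, ha.symm⟩

lemma perm3 {a b c d e f : X} (h : [a, b, c].Perm [d, e, f]) :
    ([d, e, f] = [a, b, c]) ∨ ([d, e, f] = [a, c, b]) ∨ ([d, e, f] = [b, a, c]) ∨
      ([d, e, f] = [b, c, a]) ∨ ([d, e, f] = [c, a, b]) ∨ ([d, e, f] = [c, b, a]) := by
  have hd : d ∈ [a, b, c] := h.symm.subset (by simp)
  simp only [List.mem_cons, List.mem_singleton, List.not_mem_nil, or_false] at hd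
  rcases hd with hd | hd | hd
  · subst hd
    rcases perm2 h.cons_inv with ⟨h1, h2⟩ | ⟨h1, h2⟩ <;> subst h1 <;> subst h2
    · exact Or.inl rfl
    · exact Or.inr (Or.inl rfl)
  · subst hd
    have h' : [d, a, c].Perm [d, e, f] := (List.Perm.swap d a [c]).symm.trans h
    rcases perm2 h'.cons_inv with ⟨h1, h2⟩ | ⟨h1, h2⟩ <;> subst h1 <;> subst h2
    · exact Or.inr (Or.inr (Or.inl rfl))
    · exact Or.inr (Or.inr (Or.inr (Or.inl rfl)))
  · subst hd
    have step : [a, b, d].Perm [d, a, b] :=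
      ((List.Perm.swap d b []).cons a).trans (List.Perm.swap d a [b])
    have h' : [d, a, b].Perm [d, e, f] := step.symm.trans h
    rcases perm2 h'.cons_inv with ⟨h1, h2⟩ | ⟨h1, h2⟩ <;> subst h1 <;> subst h2
    · exact Or.inr (Or.inr (Or.inr (Or.inr (Or.inl rfl))))
    · exact Or.inr (Or.inr (Or.inr (Or.inr (Or.inr rfl))))

lemma comb (l1 l2 : List X) (hl : l1.length ≤ 3) (hperm : l1.Perm l2)
    (H : ∀ p q : X,
      (l1.map fun x => if x = p then em1 else if x = q then em2 else 1).prod =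
        (l2.map fun x => if x = p then em1 else if x = q then em2 else 1).prod) :
    l1 = l2 := by
  have hlen := hperm.length_eq
  rcases l1 with _ | ⟨a, _ | ⟨b, _ | ⟨c, _ | ⟨z, t⟩⟩⟩⟩
  · exact (List.perm_nil.1 hperm.symm).symm
  · rcases l2 with _ | ⟨d, _ | ⟨e, l2t⟩⟩
    · simp at hlen
    · exact List.perm_singleton.1 hperm
    · simp at hlen
  · rcases l2 with _ | ⟨d, _ | ⟨e, _ | ⟨f, l2t⟩⟩⟩
    · simp at hlen
    · simp at hlen
    · rcases perm2 hperm with ⟨h1, h2⟩ | ⟨h1, h2⟩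
      · rw [h1, h2]
      · rw [h1, h2]
        by_cases hab : a = b
        · rw [hab]
        · exfalso
          have hH := H a b
          simp [h1, h2, hab, Ne.symm hab] at hH
          exact absurd hH (by decide)
    · simp at hlen
  · rcases l2 with _ | ⟨d, _ | ⟨e, _ | ⟨f, _ | ⟨w, l2t⟩⟩⟩⟩
    · simp at hlen
    · simp at hlen
    · simp at hlen
    · rcases perm3 hperm with hc | hc | hc | hc | hc | hc
      · rw [hc]
      · -- l2 = [a, c, b]
        rw [hc]
        by_cases hbc : b = c
        · rw [hbc]
        · by_cases hab : a = b
          · exfalso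
            have hH := H a c
            rw [hc] at hH
            simp [hab, hbc, Ne.symm hbc] at hH
            exact absurd hH (by decide)
          · by_cases hac : a = c
            · exfalso
              have hH := H a b
              rw [hc] at hH
              simp [hac, hab, Ne.symm hab, hbc, Ne.symm hbc] at hH
              exact absurd hH (by decide)
            · exfalso
              have hH := H b c
              rw [hc] at hH
              simp [hab, Ne.symm hab, hac, Ne.symm hac, hbc, Ne.symm hbc] at hH
              exact absurd hH (by decide)
      · -- l2 = [b, a, c]
        rw [hc]
        by_cases hab : a = b
        · rw [hab]
        · exfalso
          by_cases hca : c = a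
          · have hH := H b a
            rw [hc] at hH
            simp [hca, hab, Ne.symm hab] at hH
            exact absurd hH (by decide)
          · by_cases hcb : c = b
            · have hH := H a b
              rw [hc] at hH
              simp [hcb, hab, Ne.symm hab] at hH
              exact absurd hH (by decide)
            · have hH := H a b
              rw [hc] at hH
              simp [hab, Ne.symm hab, hca, hcb] at hH
              exact absurd hH (by decide)
      · -- l2 = [b, c, a]
        rw [hc]
        by_cases hab : a = b
        · by_cases hac : a = c
          · rw [← hab, ← hac]
          · exfalso
            have hH := H a c
            rw [hc] at hH
            simp [← hab, hac, Ne.symm hac] at hH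
            exact absurd hH (by decide)
        · exfalso
          by_cases hac : a = c
          · have hH := H b a
            rw [hc] at hH
            simp [← hac, hab, Ne.symm hab] at hH
            exact absurd hH (by decide)
          · by_cases hbc : b = c
            · have hH := H a b
              rw [hc] at hH
              simp [← hbc, hab, Ne.symm hab] at hH
              exact absurd hH (by decide)
            · have hH := H a b
              rw [hc] at hH
              simp [hab, Ne.symm hab, hac, Ne.symm hac, hbc, Ne.symm hbc] at hH
              exact absurd hH (by decide)
      · -- l2 = [c, a, b]
        rw [hc]
        by_cases hac : a = c
        · by_cases hab : a = b
          · rw [← hab, ← hac]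
          · exfalso
            have hH := H a b
            rw [hc] at hH
            simp [← hac, hab, Ne.symm hab] at hH
            exact absurd hH (by decide)
        · exfalso
          by_cases hab : a = b
          · have hH := H a c
            rw [hc] at hH
            simp [← hab, hac, Ne.symm hac] at hH
            exact absurd hH (by decide)
          · by_cases hbc : b = c
            · have hH := H a b
              rw [hc] at hH
              simp [← hbc, hab, Ne.symm hab] at hH
              exact absurd hH (by decide)
            · have hH := H a c
              rw [hc] at hH
              simp [hac, Ne.symm hac, hab, Ne.symm hab, hbc, Ne.symm hbc] at hH
              exact absurd hH (by decide)
      · -- l2 = [c, b, a]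
        rw [hc]
        by_cases hac : a = c
        · rw [hac]
        · exfalso
          by_cases hab : a = b
          · have hH := H a c
            rw [hc] at hH
            simp [← hab, hac, Ne.symm hac] at hH
            exact absurd hH (by decide)
          · by_cases hbc : b = c
            · have hH := H a b
              rw [hc] at hH
              simp [← hbc, hab, Ne.symm hab] at hH
              exact absurd hH (by decide)
            · have hH := H a c
              rw [hc] at hH
              simp [hac, Ne.symm hac, hab, Ne.symm hab, hbc, Ne.symm hbc] at hH
              exact absurd hH (by decide)
    · exfalso
      simp only [List.length_cons, List.length_nil] at hlen
      omega
  · exfalso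
    simp only [List.length_cons] at hl
    omega

end Comb

/-- Every nontrivial identity `u ≈ v` satisfied by `hypo` has length at least `4`:
`|u| ≥ 4` and `|v| ≥ 4`, and in fact `|u| = |v|`. -/
theorem hypo_nontrivial_identity_length {X : Type*} (u v : FreeMonoid X)
    (huv : u ≠ v) (h : MSatisfies Hypo u v) :
    4 ≤ u.toList.length ∧ 4 ≤ v.toList.length ∧
      u.toList.length = v.toList.length :=  by
  haveI := Classical.decEq X
  have hlen : u.toList.length = v.toList.length := by
    have hh := congrArg LM (h (FreeMonoid.lift fun _ : X => hypoCon.mk' (of 1)))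
    rw [eval_comp, eval_comp] at hh
    simp only [LM_of] at hh
    rw [prod_const_length, prod_const_length] at hh
    exact Multiplicative.ofAdd.injective hh
  have hcount : ∀ p : X, u.toList.count p = v.toList.count p := by
    intro p
    have hh := congrArg LM
      (h (FreeMonoid.lift fun x : X => if x = p then hypoCon.mk' (of 1) else 1))
    rw [eval_comp, eval_comp] at hh
    simp only [apply_ite LM, LM_of, map_one] at hh
    rw [prod_indicator_count, prod_indicator_count] at hh
    exact Multiplicative.ofAdd.injective hh
  have hperm : u.toList.Perm v.toList := List.perm_iff_count.2 hcount
  have H : ∀ p q : X,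
      (u.toList.map fun x => if x = p then em1 else if x = q then em2 else 1).prod =
        (v.toList.map fun x => if x = p then em1 else if x = q then em2 else 1).prod := by
    intro p q
    have hh := congrArg PhiM
      (h (FreeMonoid.lift fun x : X =>
        if x = p then hypoCon.mk' (of 1) else if x = q then hypoCon.mk' (of 2) else 1))
    rw [eval_comp, eval_comp] at hh
    simp only [apply_ite PhiM, PhiM_of, map_one, fM_one, fM_two] at hh
    exact hh
  have h4u : 4 ≤ u.toList.length := by
    by_contra h4
    push_neg at h4
    exact huv (FreeMonoid.toList.injective (comb u.toList v.toList (by omega) hperm H))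
  exact ⟨h4u, hlen ▸ h4u, hlen⟩
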